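/- Let M, N be positive integers, s, β ∈ ℂ, and for i ∈ {1, 2} let (δ_{i1}, δ_{i2}) ∈ ℝ² and define the noiseless observation y_i = (s·β/√(MN)) · Σ_{m=1}^{M} Σ_{n=1}^{N} exp( −j·2π·( (m−1)·δ_{i1}/M + (n−1)·δ_{i2}/N ) ). Then the complex number y_1 · conj(y_2) · exp( j·π·( ((M−1)/M)·(δ_{11} − δ_{21}) + ((N−1)/N)·(δ_{12} − δ_{22}) ) ) is real; equivalently, the phase difference between any two noiseless observations is determined by the direction parameter offsets alone and carries no information about the channel parameters beyond a common factor. -/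

import Mathlib

open Finset

/-- The noiseless pilot observation
`y = (s·β/√(MN)) ∑_{m=1}^{M} ∑_{n=1}^{N} exp(-j·2π·((m-1)·d₁/M + (n-1)·d₂/N))`
for a direction parameter offset `(d₁, d₂)`. -/
noncomputable def noiselessObs (M N : ℕ) (s β : ℂ) (d₁ d₂ : ℝ) : ℂ :=
  s * β / ((Real.sqrt (M * N) : ℝ) : ℂ) *
    ∑ m ∈ Finset.range M, ∑ n ∈ Finset.range N,
      Complex.exp (-Complex.I * (2 * (Real.pi : ℂ)) *
        ((m : ℂ) * (d₁ : ℂ) / (M : ℂ) + (n : ℂ) * (d₂ : ℂ) / (N : ℂ)))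

/-- The bare double-sum array factor appearing in `noiselessObs`. -/
noncomputable def arrayFactorSum (M N : ℕ) (d₁ d₂ : ℝ) : ℂ :=
  ∑ m ∈ Finset.range M, ∑ n ∈ Finset.range N,
      Complex.exp (-Complex.I * (2 * (Real.pi : ℂ)) *
        ((m : ℂ) * (d₁ : ℂ) / (M : ℂ) + (n : ℂ) * (d₂ : ℂ) / (N : ℂ)))

/-- Conjugating the array-factor sum multiplies it by a fixed phase, by reflecting indices. -/
lemma conj_arrayFactorSum (M N : ℕ) (hM : 0 < M) (hN : 0 < N) (d₁ d₂ : ℝ) :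
    (starRingEnd ℂ) (arrayFactorSum M N d₁ d₂) =
    arrayFactorSum M N d₁ d₂ * Complex.exp (Complex.I * (2 * (Real.pi : ℂ)) *
        (((M:ℂ)-1) * (d₁ : ℂ) / (M : ℂ) + ((N:ℂ)-1) * (d₂ : ℂ) / (N : ℂ))) := by
  have hMc : (M:ℂ) ≠ 0 := Nat.cast_ne_zero.mpr hM.ne'
  have hNc : (N:ℂ) ≠ 0 := Nat.cast_ne_zero.mpr hN.ne'
  unfold arrayFactorSum
  rw [map_sum, Finset.sum_mul]
  rw [← Finset.sum_range_reflect]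
  refine Finset.sum_congr rfl fun m hm => ?_
  rw [map_sum, Finset.sum_mul, ← Finset.sum_range_reflect]
  refine Finset.sum_congr rfl fun n hn => ?_
  simp only [Finset.mem_range] at hm hn
  rw [← Complex.exp_conj, ← Complex.exp_add]
  congr 1
  have h1 : ((M - 1 - m : ℕ) : ℂ) = (M:ℂ) - 1 - (m:ℂ) := by
    push_cast [Nat.cast_sub (by omega : m ≤ M - 1), Nat.cast_sub (by omega : 1 ≤ M)]; ring
  have h2 : ((N - 1 - n : ℕ) : ℂ) = (N:ℂ) - 1 - (n:ℂ) := by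
    push_cast [Nat.cast_sub (by omega : n ≤ N - 1), Nat.cast_sub (by omega : 1 ≤ N)]; ring
  rw [h1, h2]
  simp only [map_mul, map_add, map_sub, map_one, map_div₀, map_neg, Complex.conj_I, Complex.conj_ofReal,
    map_ofNat, Complex.conj_natCast]
  field_simp
  ring

/-- The phase difference between two noiseless observations is determined by the direction
parameter offsets alone: `y₁ · conj(y₂) · exp(j·π·(((M-1)/M)(δ₁₁-δ₂₁) + ((N-1)/N)(δ₁₂-δ₂₂)))`
is a real number. -/
theorem noiseless_obs_phase_relation (M N : ℕ) (hM : 0 < M) (hN : 0 < N)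
    (s β : ℂ) (δ₁₁ δ₁₂ δ₂₁ δ₂₂ : ℝ) :
    (noiselessObs M N s β δ₁₁ δ₁₂ * (starRingEnd ℂ) (noiselessObs M N s β δ₂₁ δ₂₂) *
      Complex.exp (Complex.I * (Real.pi : ℂ) *
        ((((M : ℂ) - 1) / (M : ℂ)) * ((δ₁₁ : ℂ) - (δ₂₁ : ℂ)) +
         (((N : ℂ) - 1) / (N : ℂ)) * ((δ₁₂ : ℂ) - (δ₂₂ : ℂ))))).im = 0 := by
  have hMc : (M:ℂ) ≠ 0 := Nat.cast_ne_zero.mpr hM.ne'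
  have hNc : (N:ℂ) ≠ 0 := Nat.cast_ne_zero.mpr hN.ne'
  set c : ℂ := s * β / ((Real.sqrt (M * N) : ℝ) : ℂ) with hc
  set θ₁ : ℂ := Complex.I * (2 * (Real.pi : ℂ)) *
      (((M:ℂ)-1) * (δ₁₁ : ℂ) / (M : ℂ) + ((N:ℂ)-1) * (δ₁₂ : ℂ) / (N : ℂ)) with hθ₁
  set θ₂ : ℂ := Complex.I * (2 * (Real.pi : ℂ)) *
      (((M:ℂ)-1) * (δ₂₁ : ℂ) / (M : ℂ) + ((N:ℂ)-1) * (δ₂₂ : ℂ) / (N : ℂ)) with hθ₂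
  set θE : ℂ := Complex.I * (Real.pi : ℂ) *
        ((((M : ℂ) - 1) / (M : ℂ)) * ((δ₁₁ : ℂ) - (δ₂₁ : ℂ)) +
         (((N : ℂ) - 1) / (N : ℂ)) * ((δ₁₂ : ℂ) - (δ₂₂ : ℂ))) with hθE
  have hobs : ∀ d₁ d₂ : ℝ, noiselessObs M N s β d₁ d₂ = c * arrayFactorSum M N d₁ d₂ :=
    fun _ _ => rfl
  rw [← Complex.conj_eq_iff_im, hobs, hobs]
  have h1 := conj_arrayFactorSum M N hM hN δ₁₁ δ₁₂
  have h2' := conj_arrayFactorSum M N hM hN δ₂₁ δ₂₂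
  have h2 : arrayFactorSum M N δ₂₁ δ₂₂ =
      (starRingEnd ℂ) (arrayFactorSum M N δ₂₁ δ₂₂) * Complex.exp (-θ₂) := by
    rw [h2', mul_assoc, ← Complex.exp_add, ← hθ₂, add_neg_cancel, Complex.exp_zero, mul_one]
  have hconjE : (starRingEnd ℂ) (Complex.exp θE) = Complex.exp (-θE) := by
    rw [← Complex.exp_conj]
    congr 1
    rw [hθE]
    simp only [map_mul, map_add, map_sub, map_div₀, map_one, Complex.conj_I,
      Complex.conj_ofReal, Complex.conj_natCast]
    ring
  have hexp : Complex.exp θ₁ * Complex.exp (-θ₂) * Complex.exp (-θE) = Complex.exp θE := by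
    rw [← Complex.exp_add, ← Complex.exp_add]
    congr 1
    rw [hθ₁, hθ₂, hθE]
    field_simp
    ring
  calc (starRingEnd ℂ) (c * arrayFactorSum M N δ₁₁ δ₁₂ *
        (starRingEnd ℂ) (c * arrayFactorSum M N δ₂₁ δ₂₂) * Complex.exp θE)
      = (starRingEnd ℂ) c * (starRingEnd ℂ) (arrayFactorSum M N δ₁₁ δ₁₂) *
        (c * arrayFactorSum M N δ₂₁ δ₂₂) * (starRingEnd ℂ) (Complex.exp θE) := by
        simp only [map_mul, Complex.conj_conj]
    _ = (starRingEnd ℂ) c * (arrayFactorSum M N δ₁₁ δ₁₂ * Complex.exp θ₁) *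
        (c * ((starRingEnd ℂ) (arrayFactorSum M N δ₂₁ δ₂₂) * Complex.exp (-θ₂))) *
        Complex.exp (-θE) := by
        rw [← h1, ← h2, hconjE]
    _ = (c * (starRingEnd ℂ) c * arrayFactorSum M N δ₁₁ δ₁₂ *
        (starRingEnd ℂ) (arrayFactorSum M N δ₂₁ δ₂₂)) *
        (Complex.exp θ₁ * Complex.exp (-θ₂) * Complex.exp (-θE)) := by ring
    _ = c * arrayFactorSum M N δ₁₁ δ₁₂ *
        ((starRingEnd ℂ) c * (starRingEnd ℂ) (arrayFactorSum M N δ₂₁ δ₂₂)) *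
        Complex.exp θE := by rw [hexp]; ring
    _ = c * arrayFactorSum M N δ₁₁ δ₁₂ *
        (starRingEnd ℂ) (c * arrayFactorSum M N δ₂₁ δ₂₂) * Complex.exp θE := by
        rw [map_mul]
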